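/- In the root system of type C_n (n ≥ 2) with simple roots α_1, ..., α_{n-1} (short) and β = α_n (long), suppose γ_1 ≠ γ_2 are positive roots with (1/2)·ht(γ_2) < ht(γ_1) ≤ ht(γ_2) and ⟨γ_2, γ_1^∨⟩ = 2. Then there exist integers 1 ≤ i < j ≤ n such that γ_2 = 2α_i + 2α_{i+1} + ... + 2α_{n-1} + β and γ_1 = α_i + ... + α_{j-1} + 2α_j + ... + 2α_{n-1} + β. -/
import Mathlib


namespace CnRoots

/-- The standard basis vector `e_i` of `ℚ^n` (`1`-indexed: `1 ≤ i ≤ n`). -/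
def e (n i : ℕ) : Fin n → ℚ := fun j => if (j : ℕ) + 1 = i then 1 else 0

/-- The standard inner product on `ℚ^n`. -/
def inn {n : ℕ} (x y : Fin n → ℚ) : ℚ := ∑ j, x j * y j

/-- The pairing `⟨x, y^∨⟩ = 2(x,y)/(y,y)` of a vector with the coroot of `y`. -/
def pairing {n : ℕ} (x y : Fin n → ℚ) : ℚ := 2 * inn x y / inn y y

/-- Height of a root of `C_n` (sum of its coefficients in the basis of simple roots
`α_i = e_i − e_{i+1}` (`1 ≤ i ≤ n−1`) and `β = 2e_n`); on roots it is computed by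
pairing with `ρ^∨`, i.e. `ht(γ) = Σ_j γ_j·(n − j + 1/2)` (`1`-indexed `j`). -/
def ht {n : ℕ} (x : Fin n → ℚ) : ℚ := ∑ j, x j * ((n : ℚ) - (j : ℚ) - 1 / 2)

/-- Positive roots of `C_n`: `e_i − e_j` and `e_i + e_j` for `1 ≤ i < j ≤ n`, and
`2e_i` for `1 ≤ i ≤ n`. -/
def IsPosRoot (n : ℕ) (γ : Fin n → ℚ) : Prop :=
  (∃ i j : ℕ, 1 ≤ i ∧ i < j ∧ j ≤ n ∧ γ = e n i - e n j) ∨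
  (∃ i j : ℕ, 1 ≤ i ∧ i < j ∧ j ≤ n ∧ γ = e n i + e n j) ∨
  (∃ i : ℕ, 1 ≤ i ∧ i ≤ n ∧ γ = (2 : ℚ) • e n i)

variable {n : ℕ}

lemma sum_e_mul (i : ℕ) (h1 : 1 ≤ i) (h2 : i ≤ n) (f : Fin n → ℚ) :
    ∑ k, e n i k * f k = f ⟨i - 1, by omega⟩ := by
  rw [Finset.sum_eq_single (⟨i - 1, by omega⟩ : Fin n)]
  · simp [e, Nat.sub_add_cancel h1]
  · intro k _ hk
    have : (k : ℕ) + 1 ≠ i := by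
      intro h; apply hk; apply Fin.ext; simp; omega
    simp [e, this]
  · simp

lemma inn_e {i j : ℕ} (hi1 : 1 ≤ i) (hin : i ≤ n) (hj1 : 1 ≤ j) (hjn : j ≤ n) :
    inn (e n i) (e n j) = if i = j then 1 else 0 := by
  rw [inn, sum_e_mul i hi1 hin]
  simp [e, Nat.sub_add_cancel hi1]

lemma ht_e {i : ℕ} (h1 : 1 ≤ i) (h2 : i ≤ n) :
    ht (e n i) = (n : ℚ) - i + 1 / 2 := by
  rw [ht, sum_e_mul i h1 h2]
  simp [Nat.cast_sub h1]
  ring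

lemma inn_add_left (x y z : Fin n → ℚ) : inn (x + y) z = inn x z + inn y z := by
  simp [inn, add_mul, Finset.sum_add_distrib]

lemma inn_sub_left (x y z : Fin n → ℚ) : inn (x - y) z = inn x z - inn y z := by
  simp [inn, sub_mul, Finset.sum_sub_distrib]

lemma inn_smul_left (c : ℚ) (x y : Fin n → ℚ) : inn (c • x) y = c * inn x y := by
  simp [inn, Finset.mul_sum, mul_assoc]

lemma inn_add_right (x y z : Fin n → ℚ) : inn x (y + z) = inn x y + inn x z := by
  simp [inn, mul_add, Finset.sum_add_distrib]

lemma inn_sub_right (x y z : Fin n → ℚ) : inn x (y - z) = inn x y - inn x z := by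
  simp [inn, mul_sub, Finset.sum_sub_distrib]

lemma inn_smul_right (c : ℚ) (x y : Fin n → ℚ) : inn x (c • y) = c * inn x y := by
  simp [inn, Finset.mul_sum]; congr 1; ext k; ring

lemma ht_add (x y : Fin n → ℚ) : ht (x + y) = ht x + ht y := by
  simp [ht, add_mul, Finset.sum_add_distrib]

lemma ht_sub (x y : Fin n → ℚ) : ht (x - y) = ht x - ht y := by
  simp [ht, sub_mul, Finset.sum_sub_distrib]

lemma ht_smul (c : ℚ) (x : Fin n → ℚ) : ht (c • x) = c * ht x := by
  simp [ht, Finset.mul_sum, mul_assoc]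

/-- In the root system of type `C_n` (`n ≥ 2`), suppose `γ₁ ≠ γ₂` are
positive roots with `(1/2)·ht(γ₂) < ht(γ₁) ≤ ht(γ₂)` and `⟨γ₂, γ₁^∨⟩ = 2`.  Then there
exist `1 ≤ i < j ≤ n` with `γ₂ = 2α_i + ⋯ + 2α_{n−1} + β = 2e_i` and
`γ₁ = α_i + ⋯ + α_{j−1} + 2α_j + ⋯ + 2α_{n−1} + β = e_i + e_j`. -/
theorem bad_pair_classification (n : ℕ) (hn : 2 ≤ n) (γ₁ γ₂ : Fin n → ℚ)
    (h₁ : IsPosRoot n γ₁) (h₂ : IsPosRoot n γ₂) (hne : γ₁ ≠ γ₂)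
    (hlt : ht γ₂ / 2 < ht γ₁) (hle : ht γ₁ ≤ ht γ₂)
    (hpair : pairing γ₂ γ₁ = 2) :
    ∃ i j : ℕ, 1 ≤ i ∧ i < j ∧ j ≤ n ∧
      γ₂ = (2 : ℚ) • e n i ∧ γ₁ = e n i + e n j := by
  rcases h₁ with ⟨a, b, ha1, hab, hbn, rfl⟩ | ⟨a, b, ha1, hab, hbn, rfl⟩ | ⟨k, hk1, hkn, rfl⟩
  · -- γ₁ = e a - e b
    have han : a ≤ n := by omega
    have hb1 : 1 ≤ b := by omega
    have hne_ab : a ≠ b := by omega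
    have hba : b ≠ a := by omega
    have self : inn (e n a - e n b) (e n a - e n b) = 2 := by
      simp [inn_sub_left, inn_sub_right, inn_e, ha1, han, hb1, hbn, hne_ab, hba]
      norm_num
    have hX : inn γ₂ (e n a - e n b) = 2 := by
      rw [pairing, self] at hpair; linarith
    rcases h₂ with ⟨c, d, hc1, hcd, hdn, rfl⟩ | ⟨c, d, hc1, hcd, hdn, rfl⟩ | ⟨k, hk1, hkn, rfl⟩
    · have hcn : c ≤ n := by omega
      have hd1 : 1 ≤ d := by omega
      simp only [inn_sub_left, inn_sub_right] at hX
      rw [inn_e hc1 hcn ha1 han, inn_e hc1 hcn hb1 hbn,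
        inn_e hd1 hdn ha1 han, inn_e hd1 hdn hb1 hbn] at hX
      split_ifs at hX <;>
        first | omega | (subst_vars; exact absurd rfl hne) | norm_num at hX
    · have hcn : c ≤ n := by omega
      have hd1 : 1 ≤ d := by omega
      simp only [inn_add_left, inn_sub_right] at hX
      rw [inn_e hc1 hcn ha1 han, inn_e hc1 hcn hb1 hbn,
        inn_e hd1 hdn ha1 han, inn_e hd1 hdn hb1 hbn] at hX
      split_ifs at hX <;> first | omega | norm_num at hX
    · simp only [inn_smul_left, inn_sub_right] at hX
      rw [inn_e hk1 hkn ha1 han, inn_e hk1 hkn hb1 hbn] at hX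
      split_ifs at hX with h1 h2
      · omega
      · -- k = a : height contradiction
        subst h1
        have hh1 : ht (e n k - e n b) = (b : ℚ) - k := by
          rw [ht_sub, ht_e ha1 han, ht_e hb1 hbn]; ring
        have hh2 : ht ((2 : ℚ) • e n k) = 2 * (n : ℚ) - 2 * k + 1 := by
          rw [ht_smul, ht_e ha1 han]; ring
        rw [hh1, hh2] at hlt
        have hbn' : (b : ℚ) ≤ n := by exact_mod_cast hbn
        linarith
      · norm_num at hX
      · norm_num at hX
  · -- γ₁ = e a + e b
    have han : a ≤ n := by omega
    have hb1 : 1 ≤ b := by omega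
    have hne_ab : a ≠ b := by omega
    have hba : b ≠ a := by omega
    have self : inn (e n a + e n b) (e n a + e n b) = 2 := by
      simp [inn_add_left, inn_add_right, inn_e, ha1, han, hb1, hbn, hne_ab, hba]
      norm_num
    have hX : inn γ₂ (e n a + e n b) = 2 := by
      rw [pairing, self] at hpair; linarith
    rcases h₂ with ⟨c, d, hc1, hcd, hdn, rfl⟩ | ⟨c, d, hc1, hcd, hdn, rfl⟩ | ⟨k, hk1, hkn, rfl⟩
    · have hcn : c ≤ n := by omega
      have hd1 : 1 ≤ d := by omega
      simp only [inn_sub_left, inn_add_right] at hX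
      rw [inn_e hc1 hcn ha1 han, inn_e hc1 hcn hb1 hbn,
        inn_e hd1 hdn ha1 han, inn_e hd1 hdn hb1 hbn] at hX
      split_ifs at hX <;> first | omega | norm_num at hX
    · have hcn : c ≤ n := by omega
      have hd1 : 1 ≤ d := by omega
      simp only [inn_add_left, inn_add_right] at hX
      rw [inn_e hc1 hcn ha1 han, inn_e hc1 hcn hb1 hbn,
        inn_e hd1 hdn ha1 han, inn_e hd1 hdn hb1 hbn] at hX
      split_ifs at hX <;>
        first | omega | (subst_vars; exact absurd rfl hne) | norm_num at hX
    · simp only [inn_smul_left, inn_add_right] at hX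
      rw [inn_e hk1 hkn ha1 han, inn_e hk1 hkn hb1 hbn] at hX
      split_ifs at hX with h1 h2
      · omega
      · -- k = a : the good case
        exact ⟨a, b, ha1, hab, hbn, by rw [h1], rfl⟩
      · -- k = b : height contradiction
        rename_i h2'
        subst h2'
        have hh1 : ht (e n a + e n k) = 2 * (n : ℚ) - a - k + 1 := by
          rw [ht_add, ht_e ha1 han, ht_e hb1 hbn]; ring
        have hh2 : ht ((2 : ℚ) • e n k) = 2 * (n : ℚ) - 2 * k + 1 := by
          rw [ht_smul, ht_e hb1 hbn]; ring
        rw [hh1, hh2] at hle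
        have hab' : (a : ℚ) < k := by exact_mod_cast hab
        linarith
      · norm_num at hX
  · -- γ₁ = 2 e k
    have self : inn ((2 : ℚ) • e n k) ((2 : ℚ) • e n k) = 4 := by
      simp [inn_smul_left, inn_smul_right, inn_e, hk1, hkn]
      norm_num
    have hX : inn γ₂ ((2 : ℚ) • e n k) = 4 := by
      rw [pairing, self] at hpair; linarith
    rcases h₂ with ⟨c, d, hc1, hcd, hdn, rfl⟩ | ⟨c, d, hc1, hcd, hdn, rfl⟩ | ⟨m, hm1, hmn, rfl⟩
    · have hcn : c ≤ n := by omega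
      have hd1 : 1 ≤ d := by omega
      simp only [inn_sub_left, inn_smul_right] at hX
      rw [inn_e hc1 hcn hk1 hkn, inn_e hd1 hdn hk1 hkn] at hX
      split_ifs at hX <;> first | omega | norm_num at hX
    · have hcn : c ≤ n := by omega
      have hd1 : 1 ≤ d := by omega
      simp only [inn_add_left, inn_smul_right] at hX
      rw [inn_e hc1 hcn hk1 hkn, inn_e hd1 hdn hk1 hkn] at hX
      split_ifs at hX <;> first | omega | norm_num at hX
    · simp only [inn_smul_left, inn_smul_right] at hX
      rw [inn_e hm1 hmn hk1 hkn] at hX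
      split_ifs at hX with h1
      · subst h1; exact absurd rfl hne
      · norm_num at hX


end CnRoots
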